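/- For a prime p, let M = ℤ[1/p] ∩ ℚ_{≥0} be the additive monoid of nonnegative p-adic fractions. Then the monoid algebra 𝔽_p[M] is antimatter (has no irreducible elements) and is not atomic. -/

import Mathlib

/-- An integral domain (here: commutative ring) is atomic if every nonzero nonunit
is a finite product of irreducible elements. -/
def AtomicRing (R : Type*) [CommRing R] : Prop :=
  ∀ a : R, a ≠ 0 → ¬IsUnit a →
    ∃ l : Multiset R, (∀ b ∈ l, Irreducible b) ∧ l.prod = a

/-- A ring satisfies the ascending chain condition on principal ideals (ACCP) if
every ascending chain of principal ideals stabilizes. -/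
def RingACCP (R : Type*) [CommRing R] : Prop :=
  ∀ f : ℕ → R, (∀ n, Ideal.span {f n} ≤ Ideal.span {f (n + 1)}) →
    ∃ N, ∀ n, N ≤ n → Ideal.span {f n} = Ideal.span {f N}

/-- The additive monoid M = ℤ[1/p] ∩ ℚ_{≥0} of nonnegative p-adic fractions. -/
def padicFracMonoid (p : ℕ) : AddSubmonoid ℚ where
  carrier := {q | 0 ≤ q ∧ ∃ (a : ℤ) (n : ℕ), q * (p : ℚ) ^ n = (a : ℚ)}
  zero_mem' := ⟨le_refl 0, 0, 0, by simp⟩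
  add_mem' := by
    rintro q r ⟨hq, a, m, hqa⟩ ⟨hr, b, n, hrb⟩
    refine ⟨add_nonneg hq hr, a * (p : ℤ) ^ n + b * (p : ℤ) ^ m, m + n, ?_⟩
    push_cast
    linear_combination ((p : ℚ) ^ n) * hqa + ((p : ℚ) ^ m) * hrb

lemma mem_padicFracMonoid {p : ℕ} {q : ℚ} :
    q ∈ padicFracMonoid p ↔ 0 ≤ q ∧ ∃ (a : ℤ) (n : ℕ), q * (p : ℚ) ^ n = (a : ℚ) :=
  Iff.rfl

lemma padicFracMonoid_nonneg {p : ℕ} (m : padicFracMonoid p) : 0 ≤ (m : ℚ) := m.2.1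

lemma padicFracMonoid_div_mem {p : ℕ} (hp : p.Prime) {q : ℚ} (hq : q ∈ padicFracMonoid p) :
    q / p ∈ padicFracMonoid p := by
  obtain ⟨h0, a, n, h⟩ := hq
  have hp0 : (p : ℚ) ≠ 0 := Nat.cast_ne_zero.mpr hp.pos.ne'
  refine ⟨div_nonneg h0 (by positivity), a, n + 1, ?_⟩
  field_simp
  linear_combination (p : ℚ) * h

/-- dividing an element of M by p inside M -/
noncomputable def divP {p : ℕ} (hp : p.Prime) (m : padicFracMonoid p) : padicFracMonoid p :=
  ⟨(m : ℚ) / p, padicFracMonoid_div_mem hp m.2⟩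

lemma smul_divP {p : ℕ} (hp : p.Prime) (m : padicFracMonoid p) : p • divP hp m = m := by
  have hp0 : (p : ℚ) ≠ 0 := Nat.cast_ne_zero.mpr hp.pos.ne'
  ext
  push_cast [divP]
  rw [nsmul_eq_mul]
  field_simp

instance padicCharP (p : ℕ) [Fact p.Prime] :
    CharP (AddMonoidAlgebra (ZMod p) (padicFracMonoid p)) p :=
  charP_of_injective_ringHom
    (f := AddMonoidAlgebra.singleZeroRingHom (R := ZMod p) (M := padicFracMonoid p))
    (AddMonoidAlgebra.single_right_injective (m := 0)) p

lemma pth_power (p : ℕ) (hp : p.Prime) [Fact p.Prime]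
    (f : AddMonoidAlgebra (ZMod p) (padicFracMonoid p)) : ∃ g, g ^ p = f := by
  induction f using AddMonoidAlgebra.induction with
  | zero => exact ⟨0, zero_pow hp.pos.ne'⟩
  | single_add a b f _ _ ih =>
    obtain ⟨g, hg⟩ := ih
    refine ⟨AddMonoidAlgebra.single (divP hp a) b + g, ?_⟩
    rw [add_pow_char, hg, AddMonoidAlgebra.single_pow, smul_divP hp, ZMod.pow_card]

theorem padic_monoid_algebra_antimatter_not_atomic (p : ℕ) (hp : p.Prime) [Fact p.Prime] :
    (∀ a : AddMonoidAlgebra (ZMod p) (padicFracMonoid p), ¬ Irreducible a) ∧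
    ¬ AtomicRing (AddMonoidAlgebra (ZMod p) (padicFracMonoid p)) := by
  have anti : ∀ a : AddMonoidAlgebra (ZMod p) (padicFracMonoid p), ¬ Irreducible a := by
    intro a ha
    obtain ⟨g, hg⟩ := pth_power p hp a
    have h2 : a = g * g ^ (p - 1) := by
      rw [← pow_succ', Nat.sub_add_cancel hp.one_le, hg]
    have hu : IsUnit g := by
      rcases ha.isUnit_or_isUnit h2 with h | h
      · exact h
      · exact (isUnit_pow_iff (Nat.sub_ne_zero_of_lt hp.one_lt)).mp h
    exact ha.not_isUnit (hg ▸ hu.pow p)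
  refine ⟨anti, ?_⟩
  intro hat
  -- the element x^1
  have h1mem : (1 : ℚ) ∈ padicFracMonoid p := ⟨zero_le_one, 1, 0, by simp⟩
  set m : padicFracMonoid p := ⟨1, h1mem⟩ with hm
  set a : AddMonoidAlgebra (ZMod p) (padicFracMonoid p) := AddMonoidAlgebra.single m 1 with hadef
  have ha0 : a ≠ 0 := by
    simpa [hadef] using Finsupp.single_ne_zero.mpr (one_ne_zero : (1 : ZMod p) ≠ 0)
  -- augmentation-at-0 homomorphism
  have hmul : ∀ x y : padicFracMonoid p, x + y = 0 → x = 0 := by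
    intro x y h
    have hx := padicFracMonoid_nonneg x
    have hy := padicFracMonoid_nonneg y
    have h' := congrArg (Subtype.val) h
    push_cast at h'
    ext
    push_cast
    linarith
  let φ : Multiplicative (padicFracMonoid p) →* ZMod p :=
    { toFun := fun x => if Multiplicative.toAdd x = 0 then 1 else 0
      map_one' := by simp
      map_mul' := by
        intro x y
        by_cases hx : Multiplicative.toAdd x = 0
        · by_cases hy : Multiplicative.toAdd y = 0
          · have hxy : Multiplicative.toAdd (x * y) = 0 := by
              rw [toAdd_mul, hx, hy, add_zero]
            simp [hxy, hx, hy]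
          · have hxy : Multiplicative.toAdd (x * y) ≠ 0 := fun h =>
              hy (hmul _ _ (by rwa [toAdd_mul, add_comm] at h))
            simp [hxy, hx, hy]
        · have hxy : Multiplicative.toAdd (x * y) ≠ 0 := fun h =>
            hx (hmul _ _ (by rwa [toAdd_mul] at h))
          rw [if_neg hxy, if_neg hx, zero_mul] }
  let ε := AddMonoidAlgebra.lift (ZMod p) (ZMod p) (padicFracMonoid p) φ
  have haunit : ¬ IsUnit a := by
    intro h
    have : IsUnit (ε a) := h.map ε
    have hεa : ε a = 0 := by
      rw [hadef, AddMonoidAlgebra.lift_single]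
      have hm0 : m ≠ 0 := by
        intro h
        have : (1 : ℚ) = 0 := congrArg Subtype.val h
        norm_num at this
      simp [φ, hm0]
    rw [hεa] at this
    exact not_isUnit_zero this
  obtain ⟨l, hl, hprod⟩ := hat a ha0 haunit
  have : l = 0 := Multiset.eq_zero_of_forall_notMem fun b hb => anti b (hl b hb)
  rw [this, Multiset.prod_zero] at hprod
  exact haunit (hprod ▸ isUnit_one)
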